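/- Let L be an invertible lower-triangular n×n real matrix and let Γ be a lower-triangular n×n real matrix satisfying Γ Lᵀ + L Γᵀ = 0. Then L⁻¹ Γ is a diagonal matrix; equivalently, there exists a diagonal matrix D such that Γ = L D. -/

import Mathlib

open Matrix

/-- If `L` is invertible lower-triangular and `Γ` is lower-triangular with
`Γ * Lᵀ + L * Γᵀ = 0`, then `L⁻¹ * Γ` is diagonal; equivalently `Γ = L * D`
for some diagonal matrix `D`. -/
theorem inv_mul_isDiag_of_lowerTriangular (n : ℕ)
    (L Γ : Matrix (Fin n) (Fin n) ℝ)
    (hLinv : IsUnit L)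
    (hL : ∀ i j, i < j → L i j = 0)
    (hΓ : ∀ i j, i < j → Γ i j = 0)
    (h : Γ * Lᵀ + L * Γᵀ = 0) :
    (∀ i j, i ≠ j → (L⁻¹ * Γ) i j = 0) ∧
    ∃ D : Matrix (Fin n) (Fin n) ℝ, (∀ i j, i ≠ j → D i j = 0) ∧ Γ = L * D := by
  set M := L⁻¹ * Γ with hMdef
  have hdet : IsUnit L.det := (isUnit_iff_isUnit_det L).mp hLinv
  haveI : Invertible L := hLinv.invertible
  -- lower triangular = BlockTriangular with toDual
  have hLbt : L.BlockTriangular (OrderDual.toDual : Fin n → (Fin n)ᵒᵈ) :=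
    fun i j hij => hL i j hij
  have hΓbt : Γ.BlockTriangular (OrderDual.toDual : Fin n → (Fin n)ᵒᵈ) :=
    fun i j hij => hΓ i j hij
  have hMbt : M.BlockTriangular (OrderDual.toDual : Fin n → (Fin n)ᵒᵈ) :=
    (blockTriangular_inv_of_blockTriangular hLbt).mul hΓbt
  have hMlt : ∀ i j : Fin n, i < j → M i j = 0 := fun i j hij => hMbt hij
  have hΓLM : Γ = L * M := by
    rw [hMdef, ← mul_assoc, mul_nonsing_inv L hdet, one_mul]
  clear hMdef; clear_value M
  have hLTunit : IsUnit Lᵀ := by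
    rw [isUnit_iff_isUnit_det, det_transpose]; exact hdet
  have hsum : M + Mᵀ = 0 := by
    have h1 : L * ((M + Mᵀ) * Lᵀ) = L * 0 := by
      rw [mul_zero]
      calc L * ((M + Mᵀ) * Lᵀ) = Γ * Lᵀ + L * Γᵀ := by
            rw [hΓLM, transpose_mul]; noncomm_ring
        _ = 0 := h
    have h2 : (M + Mᵀ) * Lᵀ = 0 * Lᵀ := by
      rw [zero_mul]; exact hLinv.mul_left_cancel (by rw [h1, mul_zero])
    exact hLTunit.mul_right_cancel h2
  have hoff : ∀ i j : Fin n, i ≠ j → M i j = 0 := by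
    intro i j hij
    rcases lt_or_gt_of_ne hij with h' | h'
    · exact hMlt i j h'
    · have := congrFun (congrFun hsum i) j
      simp only [Matrix.add_apply, transpose_apply, Matrix.zero_apply] at this
      rw [hMlt j i h'] at this
      linarith
  exact ⟨hoff, M, hoff, hΓLM⟩
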